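/- Let V be a finite-dimensional real vector space and L ⊆ 𝕋_ℂV a lagrangian subspace with L ∩ L̄ = 0. Let W ⊆ V be a subspace of codimension 1, with inclusion ι : W → V and complexified inclusion ι_ℂ, and let ι^!L := {X + ξ∘ι_ℂ : X ∈ W_ℂ, ξ ∈ (V_ℂ)*, X + ξ ∈ L} ⊆ 𝕋_ℂW. Then dim_ℂ(ι^!L ∩ conj(ι^!L)) = 1. -/

import Mathlib

open TensorProduct Module

noncomputable section

namespace CDirac


/-- The real generalized tangent space `V ⊕ V*`. -/
abbrev TR (V : Type*) [AddCommGroup V] [Module ℝ V] := V × (V →ₗ[ℝ] ℝ)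

variable {V : Type*} [AddCommGroup V] [Module ℝ V]

/-- The canonical pairing `⟨X+ξ, Y+η⟩ = (η X + ξ Y)/2` on `𝕋V`. -/
def pairR (a b : TR V) : ℝ := (b.2 a.1 + a.2 b.1) / 2

lemma pairR_add_left (a a' b : TR V) : pairR (a + a') b = pairR a b + pairR a' b := by
  simp only [pairR, Prod.fst_add, Prod.snd_add, map_add, LinearMap.add_apply]
  ring

lemma pairR_smul_left (c : ℝ) (a b : TR V) : pairR (c • a) b = c * pairR a b := by
  simp only [pairR, Prod.smul_fst, Prod.smul_snd, map_smul, LinearMap.smul_apply,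
    smul_eq_mul]
  ring

/-- Orthogonal complement with respect to the pairing on `𝕋V`. -/
def orthR (L : Submodule ℝ (TR V)) : Submodule ℝ (TR V) where
  carrier := {a | ∀ b ∈ L, pairR a b = 0}
  zero_mem' := fun b _ => by simp [pairR]
  add_mem' := fun {a a'} ha ha' b hb => by
    rw [pairR_add_left, ha b hb, ha' b hb, add_zero]
  smul_mem' := fun c a ha b hb => by rw [pairR_smul_left, ha b hb, mul_zero]

/-- A real lagrangian subspace: `L = L^⊥`. -/
def IsLagrangianR (L : Submodule ℝ (TR V)) : Prop := L = orthR L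

/-- An isotropic subspace of `𝕋V`. -/
def IsIsotropicR (K : Submodule ℝ (TR V)) : Prop := ∀ a ∈ K, ∀ b ∈ K, pairR a b = 0

/-- The quotient `K^⊥/K`. -/
abbrev quotK (K : Submodule ℝ (TR V)) :=
  @HasQuotient.Quotient _ _ (Submodule.hasQuotient (R := ℝ) (M := ↥(orthR K)))
    (K.comap (orthR K).subtype)

/-- The quotient map `K^⊥ → K^⊥/K`. -/
def mkK (K : Submodule ℝ (TR V)) : ↥(orthR K) →ₗ[ℝ] quotK K :=
  @Submodule.mkQ ℝ ↥(orthR K) _ (Submodule.addCommGroup _) (Submodule.module _)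
    (K.comap (orthR K).subtype)




/-- The complexification `V_ℂ = ℂ ⊗_ℝ V`. -/
abbrev Cx (V : Type*) [AddCommGroup V] [Module ℝ V] := ℂ ⊗[ℝ] V

/-- The complex dual `(V_ℂ)^*`. -/
abbrev DualC (V : Type*) [AddCommGroup V] [Module ℝ V] := Cx V →ₗ[ℂ] ℂ

/-- The complexified generalized tangent space `𝕋_ℂ V = V_ℂ ⊕ (V_ℂ)^*`. -/
abbrev TCx (V : Type*) [AddCommGroup V] [Module ℝ V] := Cx V × DualC V

/-- The ℂ-bilinear pairing on `𝕋_ℂ V`. -/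
def pairC (a b : TCx V) : ℂ := (b.2 a.1 + a.2 b.1) / 2

lemma pairC_add_left (a a' b : TCx V) : pairC (a + a') b = pairC a b + pairC a' b := by
  simp only [pairC, Prod.fst_add, Prod.snd_add, map_add, LinearMap.add_apply]
  ring

lemma pairC_smul_left (c : ℂ) (a b : TCx V) : pairC (c • a) b = c * pairC a b := by
  simp only [pairC, Prod.smul_fst, Prod.smul_snd, map_smul, LinearMap.smul_apply,
    smul_eq_mul]
  ring

/-- Orthogonal complement with respect to the ℂ-bilinear pairing on `𝕋_ℂ V`. -/
def orthC (L : Submodule ℂ (TCx V)) : Submodule ℂ (TCx V) where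
  carrier := {a | ∀ b ∈ L, pairC a b = 0}
  zero_mem' := fun b _ => by simp [pairC]
  add_mem' := fun {a a'} ha ha' b hb => by
    rw [pairC_add_left, ha b hb, ha' b hb, add_zero]
  smul_mem' := fun c a ha b hb => by rw [pairC_smul_left, ha b hb, mul_zero]

/-- A complex lagrangian subspace: `L = L^⊥`. -/
def IsLagrangianC (L : Submodule ℂ (TCx V)) : Prop := L = orthC L

private lemma conjCxAux_smul (z : ℂ) (x : Cx V) :
    TensorProduct.map Complex.conjAe.toLinearMap LinearMap.id (z • x) =
      starRingEnd ℂ z • TensorProduct.map Complex.conjAe.toLinearMap LinearMap.id x := by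
  induction x using TensorProduct.induction_on with
  | zero => simp
  | tmul w v => simp [smul_tmul', smul_eq_mul, Complex.conjAe_coe, map_mul]
  | add x y hx hy => simp only [smul_add, map_add, hx, hy]

/-- Conjugation on `V_ℂ`, as a `conj`-semilinear map. -/
def conjCx : Cx V →ₛₗ[starRingEnd ℂ] Cx V where
  toFun := TensorProduct.map Complex.conjAe.toLinearMap LinearMap.id
  map_add' := map_add _
  map_smul' := conjCxAux_smul

lemma conjCx_smul (z : ℂ) (x : Cx V) :
    conjCx (z • x) = starRingEnd ℂ z • conjCx x := conjCxAux_smul z x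

/-- Conjugation of a complex linear functional. -/
def conjDualFun (ξ : DualC V) : DualC V where
  toFun x := starRingEnd ℂ (ξ (conjCx x))
  map_add' x y := by simp
  map_smul' z x := by
    try dsimp only
    rw [conjCx_smul, map_smul, smul_eq_mul, map_mul, RingHom.id_apply]
    simp [smul_eq_mul]

/-- Conjugation on `(V_ℂ)^*`, as a `conj`-semilinear map. -/
def conjDual : DualC V →ₛₗ[starRingEnd ℂ] DualC V where
  toFun := conjDualFun
  map_add' ξ η := by ext x; simp [conjDualFun]
  map_smul' z ξ := by
    ext x
    simp [conjDualFun, smul_eq_mul, map_mul]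

/-- Conjugation on `𝕋_ℂ V`, as a `conj`-semilinear map. -/
def conjT : TCx V →ₛₗ[starRingEnd ℂ] TCx V where
  toFun a := (conjCx a.1, conjDual a.2)
  map_add' a b := by simp [Prod.ext_iff]
  map_smul' z a := by
    simp [Prod.ext_iff, Prod.smul_fst, Prod.smul_snd, map_smulₛₗ]

instance : RingHomSurjective (starRingEnd ℂ) :=
  ⟨fun z => ⟨starRingEnd ℂ z, by simp⟩⟩

/-- The conjugate `L̄` of a ℂ-subspace of `𝕋_ℂ V`. -/
def conjSub (L : Submodule ℂ (TCx V)) : Submodule ℂ (TCx V) := L.map conjT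

/-- The conjugate `Ē` of a ℂ-subspace of `V_ℂ`. -/
def conjE (E : Submodule ℂ (Cx V)) : Submodule ℂ (Cx V) := E.map conjCx

/-- The canonical inclusion `V → V_ℂ`, `v ↦ 1 ⊗ v`. -/
def iV : V →ₗ[ℝ] Cx V := TensorProduct.mk ℝ ℂ V 1





/-- ℝ-linear auxiliary version of the ℂ-linear extension of a real functional. -/
def dualExtAux (α : V →ₗ[ℝ] ℝ) : Cx V →ₗ[ℝ] ℂ :=
  TensorProduct.lift
    (LinearMap.mk₂ ℝ (fun z v => z * (α v : ℂ))
      (fun z w v => by push_cast; ring)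
      (fun r z v => by simp only [Complex.real_smul]; ring)
      (fun z v w => by push_cast [map_add]; ring)
      (fun r z v => by simp only [map_smul, smul_eq_mul, Complex.real_smul]; push_cast; ring))

private lemma dualExtAux_smulC (α : V →ₗ[ℝ] ℝ) (z : ℂ) (x : Cx V) :
    dualExtAux α (z • x) = z * dualExtAux α x := by
  induction x using TensorProduct.induction_on with
  | zero => simp
  | tmul w v =>
      simp only [dualExtAux, smul_tmul', lift.tmul, LinearMap.mk₂_apply, smul_eq_mul]
      ring
  | add x y hx hy => simp only [smul_add, map_add, hx, hy]; ring

/-- The ℂ-linear extension of a real functional `α : V → ℝ` to `V_ℂ`. -/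
def dualExtFun (α : V →ₗ[ℝ] ℝ) : DualC V where
  toFun := dualExtAux α
  map_add' := map_add _
  map_smul' z x := by simpa using dualExtAux_smulC α z x

private lemma dualExtFun_tmul (α : V →ₗ[ℝ] ℝ) (z : ℂ) (v : V) :
    dualExtFun α (z ⊗ₜ[ℝ] v) = z * (α v : ℂ) := by
  simp [dualExtFun, dualExtAux]

/-- The ℂ-linear extension map `V^* → (V_ℂ)^*`, as an ℝ-linear map. -/
def dualExt : (V →ₗ[ℝ] ℝ) →ₗ[ℝ] DualC V where
  toFun := dualExtFun
  map_add' α β := by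
    apply LinearMap.ext; intro x
    induction x using TensorProduct.induction_on with
    | zero => simp
    | tmul w v =>
        simp only [dualExtFun_tmul, LinearMap.add_apply]
        push_cast
        ring
    | add x y hx hy =>
        simp only [map_add, LinearMap.add_apply] at *
        rw [hx, hy]
  map_smul' r α := by
    apply LinearMap.ext; intro x
    induction x using TensorProduct.induction_on with
    | zero => simp
    | tmul w v =>
        simp only [dualExtFun_tmul, RingHom.id_apply, LinearMap.smul_apply,
          LinearMap.smul_apply, smul_eq_mul, Complex.real_smul]
        push_cast
        ring
    | add x y hx hy =>
        simp only [map_add, RingHom.id_apply, LinearMap.smul_apply, smul_eq_mul] at *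
        rw [hx, hy]

/-- The canonical inclusion `𝕋V → 𝕋_ℂV`. -/
def iT : TR V →ₗ[ℝ] TCx V where
  toFun a := (iV a.1, dualExt a.2)
  map_add' a b := by simp [Prod.ext_iff]
  map_smul' r a := by simp [Prod.ext_iff]



/-- Auxiliary ℝ-linear version of the ℂ-bilinear extension of a real bilinear form. -/
def bilinExtAux (B : V →ₗ[ℝ] V →ₗ[ℝ] ℝ) : Cx V →ₗ[ℝ] DualC V :=
  TensorProduct.lift
    (LinearMap.mk₂ ℝ (fun z v => z • dualExt (B v))
      (fun z w v => by simp only [add_smul])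
      (fun r z v => by simp only [smul_assoc])
      (fun z v w => by simp only [map_add, smul_add])
      (fun r z v => by simp only [map_smul]; exact smul_comm z r _))

private lemma bilinExtAux_smulC (B : V →ₗ[ℝ] V →ₗ[ℝ] ℝ) (z : ℂ) (x : Cx V) :
    bilinExtAux B (z • x) = z • bilinExtAux B x := by
  induction x using TensorProduct.induction_on with
  | zero => simp
  | tmul w v =>
      simp only [bilinExtAux, smul_tmul', lift.tmul, LinearMap.mk₂_apply, smul_eq_mul,
        mul_smul]
  | add x y hx hy => simp only [smul_add, map_add, hx, hy]

/-- The ℂ-bilinear extension of a real bilinear form `B : V × V → ℝ` to `V_ℂ`. -/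
def bilinExt (B : V →ₗ[ℝ] V →ₗ[ℝ] ℝ) : Cx V →ₗ[ℂ] DualC V where
  toFun := bilinExtAux B
  map_add' := map_add _
  map_smul' z x := by simpa using bilinExtAux_smulC B z x

/-- The `B`-transformation `e^B(X+ξ) = X + ξ + B̃(X,·)` of `𝕋_ℂV`, for a real `B`. -/
def eB (B : V →ₗ[ℝ] V →ₗ[ℝ] ℝ) : TCx V →ₗ[ℂ] TCx V where
  toFun a := (a.1, a.2 + bilinExt B a.1)
  map_add' a b := by
    simp only [Prod.fst_add, Prod.snd_add, map_add, Prod.mk_add_mk, Prod.mk.injEq]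
    exact ⟨trivial, by abel⟩
  map_smul' z a := by
    simp only [Prod.smul_fst, Prod.smul_snd, map_smul, RingHom.id_apply, Prod.smul_mk,
      Prod.mk.injEq, smul_add]

/-- The real `B`-transformation `e^B(X+α) = X + α + B(X,·)` of `𝕋V`. -/
def eBR (B : V →ₗ[ℝ] V →ₗ[ℝ] ℝ) : TR V →ₗ[ℝ] TR V where
  toFun a := (a.1, a.2 + B a.1)
  map_add' a b := by
    simp only [Prod.fst_add, Prod.snd_add, map_add, Prod.mk_add_mk, Prod.mk.injEq]
    exact ⟨trivial, by abel⟩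
  map_smul' r a := by
    simp only [Prod.smul_fst, Prod.smul_snd, map_smul, RingHom.id_apply, Prod.smul_mk,
      Prod.mk.injEq, smul_add]


/-- The range `E = pr_{V_ℂ}(L)` of a subspace of `𝕋_ℂV`. -/
def Esub (L : Submodule ℂ (TCx V)) : Submodule ℂ (Cx V) :=
  L.map (LinearMap.fst ℂ (Cx V) (DualC V))

/-- The real index `r = dim_ℂ (L ∩ L̄)`. -/
def riL (L : Submodule ℂ (TCx V)) : ℕ := finrank ℂ ↥(L ⊓ conjSub L)

/-- The real part `K = (L ∩ L̄) ∩ 𝕋V`, as a subspace of `𝕋V`. -/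
def Ksub (L : Submodule ℂ (TCx V)) : Submodule ℝ (TR V) :=
  ((L ⊓ conjSub L).restrictScalars ℝ).comap iT

/-- The distribution `D = (E + Ē) ∩ V`, as a subspace of `V`. -/
def Dsub (L : Submodule ℂ (TCx V)) : Submodule ℝ V :=
  ((Esub L ⊔ conjE (Esub L)).restrictScalars ℝ).comap iV

/-- The distribution `Δ = (E ∩ Ē) ∩ V`, as a subspace of `V`. -/
def DeltaSub (L : Submodule ℂ (TCx V)) : Submodule ℝ V :=
  ((Esub L ⊓ conjE (Esub L)).restrictScalars ℝ).comap iV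

/-- The order `s = dim V - dim D`. -/
def orderL (L : Submodule ℂ (TCx V)) : ℕ := finrank ℝ V - finrank ℝ ↥(Dsub L)

/-- The (normalized) type `k = dim_ℂ(E + Ē) - dim_ℂ E`. -/
def typeL (L : Submodule ℂ (TCx V)) : ℕ :=
  finrank ℂ ↥(Esub L ⊔ conjE (Esub L)) - finrank ℂ ↥(Esub L)


end CDirac

namespace CDirac

variable {V : Type*} [AddCommGroup V] [Module ℝ V]

/-! ### Conjugation lemmas -/

lemma conjCx_tmul (z : ℂ) (v : V) :
    conjCx (z ⊗ₜ[ℝ] v) = (starRingEnd ℂ z) ⊗ₜ[ℝ] v := by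
  simp [conjCx, Complex.conjAe_coe]

lemma conjCx_conjCx (x : Cx V) : conjCx (conjCx x) = x := by
  induction x using TensorProduct.induction_on with
  | zero => simp
  | tmul z v => rw [conjCx_tmul, conjCx_tmul]; simp
  | add x y hx hy => rw [map_add, map_add, hx, hy]

lemma conjDual_apply (ξ : DualC V) (x : Cx V) :
    conjDual ξ x = starRingEnd ℂ (ξ (conjCx x)) := rfl

lemma conjDual_conjDual (ξ : DualC V) : conjDual (conjDual ξ) = ξ := by
  ext x
  simp [conjDual_apply, conjCx_conjCx]

lemma conjT_apply (a : TCx V) : conjT a = (conjCx a.1, conjDual a.2) := rfl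

lemma conjT_conjT (a : TCx V) : conjT (conjT a) = a := by
  rw [conjT_apply, conjT_apply]
  simp only [conjCx_conjCx, conjDual_conjDual]

lemma conjT_injective : Function.Injective (conjT (V := V)) := by
  intro a b h
  have h2 := congrArg (conjT (V := V)) h
  rwa [conjT_conjT, conjT_conjT] at h2

lemma mem_conjSub {L : Submodule ℂ (TCx V)} {x : TCx V} :
    x ∈ conjSub L ↔ conjT x ∈ L := by
  constructor
  · rintro ⟨y, hy, rfl⟩
    rwa [conjT_conjT]
  · intro h
    exact ⟨conjT x, h, conjT_conjT x⟩

lemma conjT_mem_conjSub {L : Submodule ℂ (TCx V)} {x : TCx V} (hx : x ∈ L) :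
    conjT x ∈ conjSub L := ⟨x, hx, rfl⟩

/-! ### The pairing as a linear map; nondegeneracy and dimension of `orthC` -/

lemma pairC_comm (a b : TCx V) : pairC a b = pairC b a := by
  simp only [pairC]; ring

/-- The pairing as a map into the dual. -/
def pairMap : TCx V →ₗ[ℂ] Module.Dual ℂ (TCx V) :=
  LinearMap.mk₂ ℂ pairC pairC_add_left pairC_smul_left
    (fun a b b' => by
      rw [pairC_comm a (b + b'), pairC_add_left, pairC_comm b a, pairC_comm b' a])
    (fun c a b => by
      rw [pairC_comm a (c • b), pairC_smul_left, pairC_comm b a, smul_eq_mul])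

lemma pairMap_apply (a b : TCx V) : pairMap a b = pairC a b := rfl

lemma pairMap_injective : Function.Injective (pairMap (V := V)) := by
  rw [injective_iff_map_eq_zero]
  intro a ha
  have h1 : a.1 = 0 := by
    rw [← Module.forall_dual_apply_eq_zero_iff ℂ]
    intro φ
    have := DFunLike.congr_fun ha (((0 : Cx V), φ) : TCx V)
    simp only [pairMap_apply, pairC, LinearMap.zero_apply, map_zero, add_zero] at this
    have h2 : φ a.1 = 0 := by
      field_simp at this
      simpa using this
    exact h2
  have h2 : a.2 = 0 := by
    refine LinearMap.ext fun y => ?_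
    have := DFunLike.congr_fun ha ((y, (0 : DualC V)) : TCx V)
    simp only [pairMap_apply, pairC, LinearMap.zero_apply, LinearMap.zero_apply,
      zero_add] at this
    field_simp at this
    simpa using this
  have : a = (a.1, a.2) := rfl
  rw [this, h1, h2]; rfl

lemma orthC_eq_comap (L : Submodule ℂ (TCx V)) :
    orthC L = L.dualAnnihilator.comap (pairMap (V := V)) := by
  ext a
  simp only [orthC, Submodule.mem_mk, AddSubmonoid.mem_mk, AddSubsemigroup.mem_mk,
    Set.mem_setOf_eq, Submodule.mem_comap, Submodule.mem_dualAnnihilator]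
  rfl

variable [FiniteDimensional ℝ V]

instance : FiniteDimensional ℂ (Cx V) := inferInstance

instance : FiniteDimensional ℂ (TCx V) := inferInstance

lemma finrank_TCx : finrank ℂ (TCx V) = 2 * finrank ℝ V := by
  rw [Module.finrank_prod, Module.finrank_baseChange]
  have : finrank ℂ (DualC V) = finrank ℝ V := by
    rw [Subspace.dual_finrank_eq, Module.finrank_baseChange]
  rw [this]; ring

lemma pairMap_bijective : Function.Bijective (pairMap (V := V)) := by
  refine ⟨pairMap_injective, ?_⟩
  have h := (LinearMap.injective_iff_surjective_of_finrank_eq_finrank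
    (f := pairMap (V := V)) (Subspace.dual_finrank_eq).symm)
  exact h.mp pairMap_injective

lemma finrank_orthC_add (L : Submodule ℂ (TCx V)) :
    finrank ℂ (orthC L) + finrank ℂ L = finrank ℂ (TCx V) := by
  let e : TCx V ≃ₗ[ℂ] Module.Dual ℂ (TCx V) :=
    LinearEquiv.ofBijective _ (pairMap_bijective (V := V))
  have h1 : orthC L = L.dualAnnihilator.comap (e : TCx V →ₗ[ℂ] Module.Dual ℂ (TCx V)) :=
    orthC_eq_comap L
  have h2 : finrank ℂ (orthC L) = finrank ℂ L.dualAnnihilator := by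
    rw [h1, Submodule.comap_equiv_eq_map_symm]
    exact (LinearEquiv.finrank_map_eq _ _)
  rw [h2]
  have h3 : finrank ℂ L.dualAnnihilator = finrank ℂ (TCx V ⧸ L) :=
    (LinearEquiv.finrank_eq (Subspace.quotEquivAnnihilator L)).symm
  rw [h3, Submodule.finrank_quotient_add_finrank]

lemma finrank_lagrangian {L : Submodule ℂ (TCx V)} (hL : IsLagrangianC L) :
    2 * finrank ℂ L = finrank ℂ (TCx V) := by
  have := finrank_orthC_add L
  rw [← hL] at this
  omega

/-! ### `conjT` as a real-linear equivalence; dimension of `conjSub` -/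

omit [FiniteDimensional ℝ V] in
lemma smul_real_eq_smul_complex (r : ℝ) (x : TCx V) : r • x = (r : ℂ) • x := by
  rw [show ((r : ℂ)) = r • (1 : ℂ) by simp [Complex.real_smul], smul_assoc, one_smul]

/-- Conjugation as a real-linear equivalence. -/
def conjTR : TCx V ≃ₗ[ℝ] TCx V where
  toFun := conjT
  invFun := conjT
  map_add' := map_add conjT
  map_smul' r x := by
    simp only [RingHom.id_apply]
    rw [smul_real_eq_smul_complex, map_smulₛₗ, Complex.conj_ofReal,
      ← smul_real_eq_smul_complex]
  left_inv := conjT_conjT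
  right_inv := conjT_conjT

omit [FiniteDimensional ℝ V] in
lemma conjTR_apply (x : TCx V) : conjTR x = conjT x := rfl

omit [FiniteDimensional ℝ V] in
lemma conjSub_restrictScalars (L : Submodule ℂ (TCx V)) :
    (L.restrictScalars ℝ).map (conjTR.toLinearMap) = (conjSub L).restrictScalars ℝ := by
  ext x
  simp only [Submodule.mem_map, Submodule.restrictScalars_mem]
  constructor
  · rintro ⟨y, hy, rfl⟩
    exact ⟨y, hy, rfl⟩
  · rintro ⟨y, hy, rfl⟩
    exact ⟨y, hy, rfl⟩

lemma finrank_conjSub (L : Submodule ℂ (TCx V)) :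
    finrank ℂ (conjSub L) = finrank ℂ L := by
  have hR : finrank ℝ (L.restrictScalars ℝ) = finrank ℝ ((conjSub L).restrictScalars ℝ) := by
    rw [← conjSub_restrictScalars]
    exact (LinearEquiv.finrank_map_eq conjTR (L.restrictScalars ℝ)).symm
  have e1' := Submodule.restrictScalarsEquiv ℝ ℂ (TCx V) L
  have e2' := Submodule.restrictScalarsEquiv ℝ ℂ (TCx V) (conjSub L)
  have e1 : finrank ℝ (L.restrictScalars ℝ) = finrank ℝ L :=
    LinearEquiv.finrank_eq (e1'.restrictScalars ℝ)
  have e2 : finrank ℝ ((conjSub L).restrictScalars ℝ) = finrank ℝ (conjSub L) :=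
    LinearEquiv.finrank_eq (e2'.restrictScalars ℝ)
  have t1 : finrank ℝ ℂ * finrank ℂ L = finrank ℝ L :=
    Module.finrank_mul_finrank ℝ ℂ L
  have t2 : finrank ℝ ℂ * finrank ℂ (conjSub L) = finrank ℝ (conjSub L) :=
    Module.finrank_mul_finrank ℝ ℂ (conjSub L)
  rw [Complex.finrank_real_complex] at t1 t2
  omega

lemma sup_conjSub_eq_top {L : Submodule ℂ (TCx V)} (hL : IsLagrangianC L)
    (hreal : L ⊓ conjSub L = ⊥) : L ⊔ conjSub L = ⊤ := by
  apply Submodule.eq_top_of_finrank_eq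
  have h := Submodule.finrank_sup_add_finrank_inf_eq L (conjSub L)
  rw [hreal, finrank_bot, add_zero, finrank_conjSub] at h
  have h2 := finrank_lagrangian hL
  omega

/-! ### Codimension-one machinery -/

lemma exists_smul_of_ker_le_ker {K M : Type*} [Field K] [AddCommGroup M] [Module K M]
    {f g : M →ₗ[K] K} (hf : f ≠ 0) (h : LinearMap.ker f ≤ LinearMap.ker g) :
    ∃ c : K, g = c • f := by
  obtain ⟨v, hv⟩ : ∃ v, f v ≠ 0 := by
    by_contra hc
    push_neg at hc
    exact hf (LinearMap.ext fun x => by simp [hc x])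
  refine ⟨g v / f v, LinearMap.ext fun x => ?_⟩
  have hker : x - (f x / f v) • v ∈ LinearMap.ker f := by
    rw [LinearMap.mem_ker, map_sub, map_smul, smul_eq_mul, div_mul_cancel₀ _ hv, sub_self]
  have hg := h hker
  rw [LinearMap.mem_ker, map_sub, map_smul, smul_eq_mul, sub_eq_zero] at hg
  rw [LinearMap.smul_apply, smul_eq_mul, hg]
  field_simp

variable {W : Submodule ℝ V}

omit [FiniteDimensional ℝ V] in
lemma jW_injective : Function.Injective (LinearMap.baseChange ℂ W.subtype) := by
  have h : Function.Injective (W.subtype.lTensor ℂ) :=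
    Module.Flat.lTensor_preserves_injective_linearMap W.subtype W.injective_subtype
  exact h

omit [FiniteDimensional ℝ V] in
lemma conjCx_baseChange (x : Cx ↥W) :
    conjCx ((LinearMap.baseChange ℂ W.subtype) x)
      = (LinearMap.baseChange ℂ W.subtype) (conjCx x) := by
  induction x using TensorProduct.induction_on with
  | zero => simp
  | tmul z w =>
      rw [LinearMap.baseChange_tmul, conjCx_tmul, conjCx_tmul, LinearMap.baseChange_tmul]
  | add x y hx hy => rw [map_add, map_add, hx, hy, map_add conjCx x y, map_add]

omit [FiniteDimensional ℝ V] in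
lemma conjDual_comp (ζ : DualC V) :
    conjDual (ζ.comp (LinearMap.baseChange ℂ W.subtype))
      = (conjDual ζ).comp (LinearMap.baseChange ℂ W.subtype) := by
  refine LinearMap.ext fun x => ?_
  simp only [conjDual_apply, LinearMap.comp_apply, conjCx_baseChange]

omit [FiniteDimensional ℝ V] in
lemma dualExtFun_tmul' (α : V →ₗ[ℝ] ℝ) (z : ℂ) (v : V) :
    dualExtFun α (z ⊗ₜ[ℝ] v) = z * (α v : ℂ) := by
  simp [dualExtFun, dualExtAux]

omit [FiniteDimensional ℝ V] in
lemma conjDual_dualExtFun (α : V →ₗ[ℝ] ℝ) : conjDual (dualExtFun α) = dualExtFun α := by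
  refine LinearMap.ext fun x => ?_
  rw [conjDual_apply]
  induction x using TensorProduct.induction_on with
  | zero => simp
  | tmul z v =>
      rw [conjCx_tmul, dualExtFun_tmul', dualExtFun_tmul', map_mul]
      simp [Complex.conj_conj, Complex.conj_ofReal]
  | add x y hx hy =>
      rw [map_add, map_add, map_add, hx, hy]
      rw [← map_add]

/-- The main package for a codimension-one subspace: a real, nonzero functional on `V_ℂ`
    vanishing exactly on the complexification of `W`. -/
lemma codim_one_package (hW : finrank ℝ V = finrank ℝ W + 1) :
    ∃ θc : DualC V, conjDual θc = θc ∧ θc ≠ 0 ∧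
      LinearMap.range (LinearMap.baseChange ℂ W.subtype) = LinearMap.ker θc := by
  -- a real functional with kernel exactly `W`
  have hq : finrank ℝ (V ⧸ W) = 1 := by
    have h := Submodule.finrank_quotient_add_finrank W
    omega
  obtain ⟨e⟩ : Nonempty ((V ⧸ W) ≃ₗ[ℝ] ℝ) :=
    FiniteDimensional.nonempty_linearEquiv_of_finrank_eq (by rw [hq, finrank_self])
  set θ : V →ₗ[ℝ] ℝ := e.toLinearMap ∘ₗ W.mkQ with hθdef
  have hker : LinearMap.ker θ = W := by
    rw [hθdef, LinearMap.ker_comp, LinearEquiv.ker, Submodule.comap_bot, Submodule.ker_mkQ]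
  have hWne : W ≠ ⊤ := by
    intro h
    rw [h, finrank_top] at hW
    omega
  have hθne : θ ≠ 0 := fun h => hWne (by rw [← hker, h, LinearMap.ker_zero])
  obtain ⟨v, hv⟩ : ∃ v, θ v ≠ 0 := by
    by_contra hc
    push_neg at hc
    exact hθne (LinearMap.ext fun x => by simp [hc x])
  refine ⟨dualExtFun θ, conjDual_dualExtFun θ, ?_, ?_⟩
  · intro h
    have := DFunLike.congr_fun h ((1 : ℂ) ⊗ₜ[ℝ] v)
    rw [dualExtFun_tmul'] at this
    simp only [one_mul, LinearMap.zero_apply] at this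
    exact hv (by exact_mod_cast this)
  · -- range j = ker θc
    apply Submodule.eq_of_le_of_finrank_le
    · rintro x ⟨y, rfl⟩
      rw [LinearMap.mem_ker]
      induction y using TensorProduct.induction_on with
      | zero => simp
      | tmul z w =>
          rw [LinearMap.baseChange_tmul, Submodule.coe_subtype, dualExtFun_tmul']
          have hw : θ (w : V) = 0 := by
            have : (w : V) ∈ LinearMap.ker θ := by rw [hker]; exact w.2
            exact this
          rw [hw]
          simp
      | add x y hx hy => rw [map_add, map_add, hx, hy, add_zero]
    · -- finrank (ker θc) ≤ finrank (range j)
      have hsurjC : Function.Surjective (dualExtFun θ) := by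
        intro c
        refine ⟨(c / (θ v : ℂ)) • ((1 : ℂ) ⊗ₜ[ℝ] v), ?_⟩
        rw [map_smul, dualExtFun_tmul', smul_eq_mul, one_mul,
          div_mul_cancel₀]
        exact_mod_cast hv
      have h1 : finrank ℂ (LinearMap.ker (dualExtFun θ)) + 1 = finrank ℝ V := by
        have h2 := LinearMap.finrank_range_add_finrank_ker (dualExtFun θ)
        rw [LinearMap.range_eq_top.mpr hsurjC, finrank_top, finrank_self,
          Module.finrank_baseChange] at h2
        omega
      have h3 : finrank ℂ (LinearMap.range (LinearMap.baseChange ℂ W.subtype))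
          = finrank ℝ W := by
        rw [LinearMap.finrank_range_of_inj jW_injective, Module.finrank_baseChange]
      have h4 : finrank ℂ (LinearMap.ker (dualExtFun θ)) = finrank ℝ W := by omega
      rw [h3, h4]

end CDirac

open CDirac Module

set_option maxHeartbeats 1600000 in
/-- If `L ⊆ 𝕋_ℂV` is lagrangian with `L ∩ L̄ = 0` and `W ⊆ V` has
codimension `1`, then the backward image `ι^!L` under the inclusion `ι : W → V`
satisfies `dim_ℂ(ι^!L ∩ conj(ι^!L)) = 1`. -/
theorem stmt3 (V : Type*) [AddCommGroup V] [Module ℝ V] [FiniteDimensional ℝ V]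
    (L : Submodule ℂ (TCx V)) (hL : IsLagrangianC L) (hreal : L ⊓ conjSub L = ⊥)
    (W : Submodule ℝ V) (hW : finrank ℝ V = finrank ℝ ↥W + 1)
    (L' : Submodule ℂ (TCx ↥W))
    (hL' : (L' : Set (TCx ↥W)) =
      {a : TCx ↥W | ∃ (X : Cx ↥W) (ξ : DualC V),
        a = (X, ξ.comp (LinearMap.baseChange ℂ W.subtype)) ∧
        ((LinearMap.baseChange ℂ W.subtype) X, ξ) ∈ L}) :
    finrank ℂ ↥(L' ⊓ conjSub L') = 1 := by
  classical
  obtain ⟨θc, hθconj, hθcne, hrange⟩ := codim_one_package (W := W) hW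
  set j : Cx ↥W →ₗ[ℂ] Cx V := LinearMap.baseChange ℂ W.subtype with hjdef
  have hjinj : Function.Injective j := jW_injective
  have hθcj : ∀ y : Cx ↥W, θc (j y) = 0 := by
    intro y
    have h : j y ∈ LinearMap.ker θc := hrange ▸ LinearMap.mem_range_self j y
    exact h
  have hann : ∀ ρ : DualC V, ρ.comp j = 0 → ∃ c : ℂ, ρ = c • θc := by
    intro ρ hρ
    refine exists_smul_of_ker_le_ker hθcne ?_
    rw [← hrange]
    rintro x ⟨y, rfl⟩
    have := DFunLike.congr_fun hρ y
    simpa using this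
  -- the real element `k`
  set k : TCx V := ((0 : Cx V), θc) with hkdef
  have hkconj : conjT k = k := by
    rw [conjT_apply]
    exact Prod.ext (map_zero conjCx) hθconj
  have hkne : k ≠ 0 := by
    intro h
    exact hθcne (congrArg Prod.snd h)
  -- write `k = a + conjT a` with `a ∈ L`
  have hsup := sup_conjSub_eq_top hL hreal
  have hk : k ∈ L ⊔ conjSub L := by rw [hsup]; exact Submodule.mem_top
  obtain ⟨a, haL, b, hb, hab⟩ := Submodule.mem_sup.mp hk
  obtain ⟨b₀, hb₀L, rfl⟩ := hb
  have hd : a - b₀ = conjT (a - b₀) := by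
    have h1 : conjT a + b₀ = k := by
      have := congrArg conjT hab
      rwa [map_add, conjT_conjT, hkconj] at this
    have h2 : a + conjT b₀ = conjT a + b₀ := hab.trans h1.symm
    rw [map_sub]
    have : a - b₀ - (conjT a - conjT b₀) = (a + conjT b₀) - (conjT a + b₀) := by abel
    have h3 : a - b₀ - (conjT a - conjT b₀) = 0 := by rw [this, h2, sub_self]
    linear_combination (norm := abel) h3
  have hab₀ : a = b₀ := by
    have hmem : a - b₀ ∈ L ⊓ conjSub L := by
      refine Submodule.mem_inf.mpr ⟨sub_mem haL hb₀L, mem_conjSub.mpr ?_⟩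
      rw [← hd]
      exact sub_mem haL hb₀L
    rw [hreal] at hmem
    have := Submodule.mem_bot (R := ℂ) |>.mp hmem
    linear_combination (norm := abel) this
  have hk_eq : k = a + conjT a := by rw [← hab]; rw [hab₀]
  -- component identities
  have hc1 : a.1 + conjCx a.1 = 0 := by
    have h := congrArg Prod.fst hk_eq
    simpa [hkdef, conjT_apply] using h.symm
  have hc2 : a.2 + conjDual a.2 = θc := by
    have h := congrArg Prod.snd hk_eq
    simpa [hkdef, conjT_apply] using h.symm
  have hxx : a.2 a.1 = 0 := by
    have haO : a ∈ orthC L := by rw [← hL]; exact haL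
    have hpair : pairC a a = 0 := haO a haL
    have : pairC a a = a.2 a.1 := by
      simp only [pairC]
      ring
    rwa [this] at hpair
  have hconjX : conjCx a.1 = -a.1 := by linear_combination (norm := abel) hc1
  have hθX : θc a.1 = 0 := by
    have h2 := DFunLike.congr_fun hc2 a.1
    rw [LinearMap.add_apply, hxx, conjDual_apply, hconjX, map_neg, hxx, neg_zero,
      map_zero, zero_add] at h2
    exact h2.symm
  obtain ⟨X', hX'⟩ : ∃ X', j X' = a.1 := by
    have h : a.1 ∈ LinearMap.range j := by
      rw [hrange]
      exact hθX
    exact h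
  -- the distinguished element `u`
  set u : TCx ↥W := (X', a.2.comp j) with hudef
  have hmem : ∀ x : TCx ↥W, x ∈ L' ↔
      ∃ X ξ, x = (X, LinearMap.comp ξ j) ∧ ((j X, ξ) ∈ L) := by
    intro x
    have h := Set.ext_iff.mp hL' x
    simpa using h
  have huL' : u ∈ L' := by
    refine (hmem u).mpr ⟨X', a.2, rfl, ?_⟩
    rw [hX']
    simpa using haL
  have hconj_u : conjT u ∈ L' := by
    refine (hmem _).mpr ⟨conjCx X', -a.2, ?_, ?_⟩
    · rw [conjT_apply]
      refine Prod.ext rfl ?_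
      simp only [hudef]
      rw [conjDual_comp]
      refine LinearMap.ext fun y => ?_
      have hθ2 : conjDual a.2 = θc - a.2 := by
        rw [← hc2]
        abel
      simp only [LinearMap.comp_apply, LinearMap.neg_apply, hθ2, LinearMap.sub_apply,
        hθcj y, zero_sub]
      rw [← hjdef, hθcj y, zero_sub]
    · have hjc : j (conjCx X') = -a.1 := by
        rw [← conjCx_baseChange, hX', hconjX]
      rw [hjc]
      have : ((-a.1 : Cx V), -a.2) = -a := rfl
      rw [this]
      exact neg_mem haL
  have hu_conjSub : u ∈ conjSub L' := mem_conjSub.mpr hconj_u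
  have hu_ne : u ≠ 0 := by
    intro h0
    have hX0 : X' = 0 := congrArg Prod.fst h0
    have hξ0 : a.2.comp j = 0 := congrArg Prod.snd h0
    obtain ⟨c, hc⟩ := hann a.2 hξ0
    have ha1 : a.1 = 0 := by rw [← hX', hX0, map_zero]
    have haeq : a = c • k := by
      refine Prod.ext ?_ ?_
      · simp [hkdef, ha1]
      · simp [hkdef, hc]
    have h1 : conjT (c • k) = (starRingEnd ℂ c) • k := by rw [map_smulₛₗ, hkconj]
    have h2 : k = (c + starRingEnd ℂ c) • k := by
      conv_lhs => rw [hk_eq]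
      rw [haeq, h1, add_smul]
    have h3 : (1 - (c + starRingEnd ℂ c)) • k = 0 := by
      rw [sub_smul, one_smul, ← h2, sub_self]
    rcases smul_eq_zero.mp h3 with h4 | h4
    · have hsum : c + starRingEnd ℂ c = 1 := by linear_combination -h4
      have hcne : c ≠ 0 := by
        intro hc0
        rw [hc0, map_zero, add_zero] at hsum
        exact zero_ne_one hsum
      have hkL : k ∈ L := by
        have hki : k = c⁻¹ • a := by
          rw [haeq, smul_smul, inv_mul_cancel₀ hcne, one_smul]
        rw [hki]
        exact Submodule.smul_mem _ _ haL
      have hkc : k ∈ conjSub L := mem_conjSub.mpr (by rw [hkconj]; exact hkL)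
      have hkb : k ∈ (⊥ : Submodule ℂ (TCx V)) := by
        rw [← hreal]
        exact Submodule.mem_inf.mpr ⟨hkL, hkc⟩
      exact hkne (Submodule.mem_bot (R := ℂ) |>.mp hkb)
    · exact hkne h4
  -- the intersection is the span of `u`
  have hspan : L' ⊓ conjSub L' = Submodule.span ℂ {u} := by
    apply le_antisymm
    · intro w hw
      obtain ⟨hw1, hw2⟩ := Submodule.mem_inf.mp hw
      obtain ⟨Y', ζ, hweq, hbL⟩ := (hmem w).mp hw1
      have hcw : conjT w ∈ L' := mem_conjSub.mp hw2
      obtain ⟨Z', ζ₂, hceq, hbL2⟩ := (hmem _).mp hcw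
      have hcw_eq : conjT w = (conjCx Y', (conjDual ζ).comp j) := by
        rw [hweq, conjT_apply]
        exact Prod.ext rfl (conjDual_comp ζ)
      rw [hcw_eq] at hceq
      obtain ⟨hZ, hρ⟩ := Prod.mk.injEq _ _ _ _ ▸ hceq
      have hρ0 : (conjDual ζ - ζ₂).comp j = 0 := by
        rw [LinearMap.sub_comp, hρ, sub_self]
      obtain ⟨c, hc⟩ := hann _ hρ0
      have hζ₂ : conjDual ζ = ζ₂ + c • θc := by
        have : conjDual ζ - ζ₂ = c • θc := hc
        linear_combination (norm := module) this
      have key : conjT ((j Y', ζ) : TCx V) - c • k = ((j Z', ζ₂) : TCx V) := by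
        refine Prod.ext ?_ ?_
        · show conjCx (j Y') - c • (0 : Cx V) = j Z'
          rw [smul_zero, sub_zero, conjCx_baseChange, ← hZ]
        · show conjDual ζ - c • θc = ζ₂
          rw [hζ₂]
          abel
      have hmemL : conjT ((j Y', ζ) : TCx V) - c • k ∈ L := by
        rw [key]
        exact hbL2
      have hLmem2 : conjT ((j Y', ζ) : TCx V) - c • conjT a ∈ L := by
        have hexp : conjT ((j Y', ζ) : TCx V) - c • conjT a
            = (conjT ((j Y', ζ) : TCx V) - c • k) + c • a := by
          rw [hk_eq, smul_add]
          abel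
        rw [hexp]
        exact add_mem hmemL (Submodule.smul_mem _ _ haL)
      have hconjform : conjT (((j Y', ζ) : TCx V) - (starRingEnd ℂ c) • a)
          = conjT ((j Y', ζ) : TCx V) - c • conjT a := by
        rw [map_sub, map_smulₛₗ, Complex.conj_conj]
      have hbot : ((j Y', ζ) : TCx V) - (starRingEnd ℂ c) • a ∈ L ⊓ conjSub L := by
        refine Submodule.mem_inf.mpr ⟨sub_mem hbL (Submodule.smul_mem _ _ haL), ?_⟩
        rw [mem_conjSub, hconjform]
        exact hLmem2
      rw [hreal] at hbot
      have hzero := Submodule.mem_bot (R := ℂ) |>.mp hbot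
      have hba : ((j Y', ζ) : TCx V) = (starRingEnd ℂ c) • a := by
        rwa [sub_eq_zero] at hzero
      refine Submodule.mem_span_singleton.mpr ⟨starRingEnd ℂ c, ?_⟩
      have h1 : j Y' = j ((starRingEnd ℂ c) • X') := by
        have hfst : j Y' = (starRingEnd ℂ c) • a.1 := congrArg Prod.fst hba
        rw [hfst, ← hX', map_smul]
      have hY : Y' = (starRingEnd ℂ c) • X' := hjinj h1
      have hζeq : ζ = (starRingEnd ℂ c) • a.2 := congrArg Prod.snd hba
      rw [hweq, hY, hζeq, hudef]
      refine Prod.ext ?_ ?_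
      · simp
      · show ((starRingEnd ℂ c) • a.2).comp j = (starRingEnd ℂ c) • (a.2.comp j)
        rw [LinearMap.smul_comp]
    · rw [Submodule.span_le, Set.singleton_subset_iff]
      exact Submodule.mem_inf.mpr ⟨huL', hu_conjSub⟩
  rw [hspan]
  exact finrank_span_singleton hu_ne
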